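/- Lower bound lemma for correct-testing exponent: suppose for all n and all tests the inequality Tr((ρ_n − e^{na}σ_n)(I − S_n(a))) ≤ Tr((ρ_n − e^{na}σ_n)(I − T_n)) holds, i.e. α_n(a) − e^{na}β_n^c(a) ≤ α_n[T_n] − e^{na}β_n^c[T_n], where β_n^c[T] = σ_n[I − T]. Then for any real a and any test sequence T, limsup −(1/n) log β_n^c[T_n] ≥ min( limsup −(1/n) log β_n^c(a), a + liminf −(1/n) log α_n[T_n] ). -/

import Mathlib

open Filter

/-- The liminf exponential rate `liminf -(1/n) log p n`, with the convention
that the exponent is `+∞` when `p n = 0` (i.e. `log 0 = -∞`). -/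
noncomputable def liminfExpRate (p : ℕ → ℝ) : EReal :=
  Filter.liminf (fun n => if p n = 0 then (⊤ : EReal)
    else ((-(1 / (n : ℝ)) * Real.log (p n) : ℝ) : EReal)) Filter.atTop

/-- The limsup exponential rate `limsup -(1/n) log p n`, with the convention
that the exponent is `+∞` when `p n = 0`. -/
noncomputable def limsupExpRate (p : ℕ → ℝ) : EReal :=
  Filter.limsup (fun n => if p n = 0 then (⊤ : EReal)
    else ((-(1 / (n : ℝ)) * Real.log (p n) : ℝ) : EReal)) Filter.atTop

/-- From `c < rate term` deduce the exponential bound `p < exp (-(n c))`. -/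
lemma rate_lt_imp {p : ℝ} (hp : 0 ≤ p) {n : ℕ} (hn : 1 ≤ n) {c : ℝ}
    (h : (c : EReal) < (if p = 0 then (⊤ : EReal)
      else ((-(1 / (n : ℝ)) * Real.log p : ℝ) : EReal))) :
    p < Real.exp (-((n : ℝ) * c)) := by
  split_ifs at h with hp0
  · rw [hp0]; exact Real.exp_pos _
  · have hn' : (0 : ℝ) < n := by exact_mod_cast hn
    have hppos : 0 < p := lt_of_le_of_ne hp (Ne.symm hp0)
    rw [EReal.coe_lt_coe_iff] at h
    have h2 : Real.log p < -((n : ℝ) * c) := by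
      have h3 := mul_lt_mul_of_pos_right h hn'
      have e : (-(1 / (n : ℝ)) * Real.log p) * n = -Real.log p := by
        field_simp
      rw [e] at h3
      nlinarith
    exact (Real.log_lt_iff_lt_exp hppos).mp h2

/-- From the exponential bound `p < exp (-(n c))` deduce `c ≤ rate term`. -/
lemma exp_bound_imp_rate {p : ℝ} (hp : 0 ≤ p) {n : ℕ} (hn : 1 ≤ n) {c : ℝ}
    (h : p < Real.exp (-((n : ℝ) * c))) :
    (c : EReal) ≤ (if p = 0 then (⊤ : EReal)
      else ((-(1 / (n : ℝ)) * Real.log p : ℝ) : EReal)) := by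
  split_ifs with hp0
  · exact le_top
  · have hn' : (0 : ℝ) < n := by exact_mod_cast hn
    have hppos : 0 < p := lt_of_le_of_ne hp (Ne.symm hp0)
    have h2 : Real.log p < -((n : ℝ) * c) := (Real.log_lt_iff_lt_exp hppos).mpr h
    rw [EReal.coe_le_coe_iff]
    have e : -(1 / (n : ℝ)) * Real.log p = -Real.log p / n := by ring
    rw [e, le_div_iff₀ hn']
    nlinarith

theorem correct_exponent_lower_bound (a : ℝ) (αa βca αT βcT : ℕ → ℝ)
    (h1 : ∀ n, 0 ≤ αa n) (h2 : ∀ n, 0 ≤ βca n)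
    (h3 : ∀ n, 0 ≤ αT n) (h4 : ∀ n, 0 ≤ βcT n)
    (hNP : ∀ n : ℕ,
      αa n - Real.exp (n * a) * βca n ≤ αT n - Real.exp (n * a) * βcT n) :
    min (limsupExpRate βca) ((a : EReal) + liminfExpRate αT) ≤ limsupExpRate βcT := by
  by_contra hcon
  push_neg at hcon
  obtain ⟨c', hc'1, hc'2⟩ := EReal.exists_between_coe_real hcon
  obtain ⟨c, hc1, hc2⟩ := EReal.exists_between_coe_real hc'2
  have hc'c : c' < c := by exact_mod_cast hc1
  rw [lt_min_iff] at hc2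
  obtain ⟨hca, haT⟩ := hc2
  -- transfer the `a +` across
  have haT' : ((c - a : ℝ) : EReal) < liminfExpRate αT := by
    by_contra hcon2
    push_neg at hcon2
    have h5 : (a : EReal) + liminfExpRate αT ≤ (a : EReal) + ((c - a : ℝ) : EReal) :=
      add_le_add_right hcon2 _
    have h6 : (a : EReal) + ((c - a : ℝ) : EReal) = (c : EReal) := by
      rw [← EReal.coe_add]; exact congrArg _ (by ring)
    rw [h6] at h5
    exact absurd haT (not_lt.mpr h5)
  -- pointwise bound from hNP
  have key : ∀ n : ℕ, βcT n ≤ βca n + Real.exp (-((n : ℝ) * a)) * αT n := by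
    intro n
    have hE : (0 : ℝ) < Real.exp ((n : ℝ) * a) := Real.exp_pos _
    have hE' : (0 : ℝ) < Real.exp (-((n : ℝ) * a)) := Real.exp_pos _
    have hprod : Real.exp (-((n : ℝ) * a)) * Real.exp ((n : ℝ) * a) = 1 := by
      rw [← Real.exp_add]; simp
    have h5 := hNP n
    have h6 := h1 n
    have h7 := mul_le_mul_of_nonneg_left h5 hE'.le
    rw [mul_sub, mul_sub, ← mul_assoc, ← mul_assoc, hprod, one_mul, one_mul] at h7
    have h8 : 0 ≤ Real.exp (-((n : ℝ) * a)) * αa n := mul_nonneg hE'.le h6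
    linarith
  -- frequently βca n is exponentially small
  have hfreqβ : ∃ᶠ n in atTop, (c : EReal) < (if βca n = 0 then (⊤ : EReal)
      else ((-(1 / (n : ℝ)) * Real.log (βca n) : ℝ) : EReal)) :=
    frequently_lt_of_lt_limsup (by isBoundedDefault) hca
  -- eventually αT n is exponentially small
  have hevα : ∀ᶠ n in atTop, ((c - a : ℝ) : EReal) < (if αT n = 0 then (⊤ : EReal)
      else ((-(1 / (n : ℝ)) * Real.log (αT n) : ℝ) : EReal)) :=
    eventually_lt_of_lt_liminf haT'
  have hev1 : ∀ᶠ n : ℕ in atTop, 1 ≤ n := eventually_ge_atTop 1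
  have hev2 : ∀ᶠ n : ℕ in atTop, Real.log 2 ≤ (n : ℝ) * (c - c') := by
    have := (tendsto_natCast_atTop_atTop (R := ℝ)).eventually_ge_atTop
      (Real.log 2 / (c - c'))
    filter_upwards [this] with n hn
    rw [div_le_iff₀ (by linarith)] at hn
    exact hn
  have hfreq : ∃ᶠ n in atTop, (c' : EReal) ≤ (if βcT n = 0 then (⊤ : EReal)
      else ((-(1 / (n : ℝ)) * Real.log (βcT n) : ℝ) : EReal)) := by
    refine (hfreqβ.and_eventually (hevα.and (hev1.and hev2))).mono ?_
    rintro n ⟨hb, hα, hn1, hn2⟩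
    have hβb : βca n < Real.exp (-((n : ℝ) * c)) := rate_lt_imp (h2 n) hn1 hb
    have hαb : αT n < Real.exp (-((n : ℝ) * (c - a))) := rate_lt_imp (h3 n) hn1 hα
    have hmul : Real.exp (-((n : ℝ) * a)) * Real.exp (-((n : ℝ) * (c - a)))
        = Real.exp (-((n : ℝ) * c)) := by
      rw [← Real.exp_add]; ring_nf
    have h2exp : 2 * Real.exp (-((n : ℝ) * c)) ≤ Real.exp (-((n : ℝ) * c')) := by
      have h7 : (2 : ℝ) ≤ Real.exp ((n : ℝ) * (c - c')) :=
        (Real.log_le_iff_le_exp (by norm_num)).mp hn2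
      have h8 : Real.exp ((n : ℝ) * (c - c')) * Real.exp (-((n : ℝ) * c))
          = Real.exp (-((n : ℝ) * c')) := by
        rw [← Real.exp_add]; ring_nf
      nlinarith [Real.exp_pos (-((n : ℝ) * c))]
    have hfinal : βcT n < Real.exp (-((n : ℝ) * c')) := by
      have := key n
      have hmm : Real.exp (-((n : ℝ) * a)) * αT n < Real.exp (-((n : ℝ) * c)) := by
        calc Real.exp (-((n : ℝ) * a)) * αT n
            < Real.exp (-((n : ℝ) * a)) * Real.exp (-((n : ℝ) * (c - a))) :=
              mul_lt_mul_of_pos_left hαb (Real.exp_pos _)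
          _ = Real.exp (-((n : ℝ) * c)) := hmul
      linarith
    exact exp_bound_imp_rate (h4 n) hn1 hfinal
  have := le_limsup_of_frequently_le hfreq (by isBoundedDefault)
  exact absurd this (not_le.mpr hc'1)
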